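/- For every μ ∈ (0,1), the PCR3BP has at least three collinear equilibrium points on the y₁-axis: there exist x₁ ∈ (0,1), x₂ ∈ (1,∞) and x₃ ∈ (−∞,0) such that each constant curve y(t) ≡ (xᵢ, 0) solves the equations of motion; equivalently, the function g(x) = x − μ − (1−μ)·x/|x|³ − μ·(x−1)/|x−1|³ has a zero in each of the intervals (0,1), (1,∞) and (−∞,0). -/

import Mathlib

noncomputable section

/-- Distance from `y` to the primary `P₁ = (0,0)`. -/
def r1 (y : ℝ × ℝ) : ℝ := Real.sqrt (y.1 ^ 2 + y.2 ^ 2)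

/-- Distance from `y` to the secondary `P₂ = (1,0)`. -/
def r2 (y : ℝ × ℝ) : ℝ := Real.sqrt ((y.1 - 1) ^ 2 + y.2 ^ 2)

/-- Effective potential of the PCR3BP in rotating coordinates. -/
def Omega (μ : ℝ) (y : ℝ × ℝ) : ℝ :=
  (1 / 2) * ((y.1 - μ) ^ 2 + y.2 ^ 2) + (1 - μ) / r1 y + μ / r2 y + (1 / 2) * μ * (1 - μ)

/-- Jacobi integral `J(y, v) = 2Ω(y) − |v|²`. -/
def Jacobi (μ : ℝ) (y v : ℝ × ℝ) : ℝ := 2 * Omega μ y - (v.1 ^ 2 + v.2 ^ 2)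

/-- Partial derivative `∂Ω/∂y₁`. -/
def OmegaY1 (μ : ℝ) (y : ℝ × ℝ) : ℝ := deriv (fun x => Omega μ (x, y.2)) y.1

/-- Partial derivative `∂Ω/∂y₂`. -/
def OmegaY2 (μ : ℝ) (y : ℝ × ℝ) : ℝ := deriv (fun x => Omega μ (y.1, x)) y.2

/-- The curve `t ↦ (y₁ t, y₂ t)` solves the PCR3BP equations of motion
`ÿ₁ − 2ẏ₂ = ∂Ω/∂y₁`, `ÿ₂ + 2ẏ₁ = ∂Ω/∂y₂` at every time of `I`. -/
def IsSolutionOn (μ : ℝ) (I : Set ℝ) (y₁ y₂ : ℝ → ℝ) : Prop :=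
  ∀ t ∈ I,
    deriv (deriv y₁) t - 2 * deriv y₂ t = OmegaY1 μ (y₁ t, y₂ t) ∧
    deriv (deriv y₂) t + 2 * deriv y₁ t = OmegaY2 μ (y₁ t, y₂ t)

/-- `f` is twice differentiable at every point of `I`. -/
def TwiceDiffOn (I : Set ℝ) (f : ℝ → ℝ) : Prop :=
  ∀ t ∈ I, DifferentiableAt ℝ f t ∧ DifferentiableAt ℝ (deriv f) t

/-- The restriction of `∂Ω/∂y₁` to the `y₁`-axis. -/
def gAxis (μ x : ℝ) : ℝ :=
  x - μ - (1 - μ) * x / |x| ^ 3 - μ * (x - 1) / |x - 1| ^ 3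
lemma sqrt_hasDeriv (a x : ℝ) (h : x ≠ a) :
    HasDerivAt (fun t => Real.sqrt ((t - a) ^ 2 + 0 ^ 2)) ((x - a) / |x - a|) x := by
  have h1 : HasDerivAt (fun t : ℝ => (t - a) ^ 2 + 0 ^ 2) (2 * (x - a)) x := by
    have h := (((hasDerivAt_id x).sub_const a).pow 2).add_const ((0:ℝ) ^ 2)
    refine h.congr_deriv (Eq.symm ?_); simp only [id_eq]; ring
  have hne : (x - a) ^ 2 + 0 ^ 2 ≠ 0 := by
    have : x - a ≠ 0 := sub_ne_zero.mpr h
    positivity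
  have h2 := h1.sqrt hne
  convert h2 using 1
  rw [show (x - a) ^ 2 + 0 ^ 2 = (x - a) ^ 2 by ring, Real.sqrt_sq_eq_abs]
  have habs : |x - a| ≠ 0 := abs_ne_zero.mpr (sub_ne_zero.mpr h)
  field_simp

lemma invsqrt_hasDeriv (a c x : ℝ) (h : x ≠ a) :
    HasDerivAt (fun t => c / Real.sqrt ((t - a) ^ 2 + 0 ^ 2))
      (-(c * (x - a) / |x - a| ^ 3)) x := by
  have hs := sqrt_hasDeriv a x h
  have habs : |x - a| ≠ 0 := abs_ne_zero.mpr (sub_ne_zero.mpr h)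
  have hne : Real.sqrt ((x - a) ^ 2 + 0 ^ 2) ≠ 0 := by
    rw [show (x - a) ^ 2 + 0 ^ 2 = (x - a) ^ 2 by ring, Real.sqrt_sq_eq_abs]; exact habs
  have hd := (hasDerivAt_const x c).div hs hne
  refine hd.congr_deriv (Eq.symm ?_)
  rw [show (x - a) ^ 2 + 0 ^ 2 = (x - a) ^ 2 by ring, Real.sqrt_sq_eq_abs]
  set u := |x - a| with hu
  field_simp
  ring

lemma vert_hasDeriv (a c : ℝ) (ha : a ≠ 0) :
    HasDerivAt (fun s => c / Real.sqrt (a ^ 2 + s ^ 2)) 0 0 := by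
  have h1 : HasDerivAt (fun s : ℝ => a ^ 2 + s ^ 2) 0 0 := by
    have h := ((hasDerivAt_id (0:ℝ)).pow 2).const_add (a ^ 2)
    refine h.congr_deriv (Eq.symm ?_); simp
  have hne : a ^ 2 + (0:ℝ) ^ 2 ≠ 0 := by positivity
  have h2 := h1.sqrt hne
  have hne2 : Real.sqrt (a ^ 2 + (0:ℝ) ^ 2) ≠ 0 := Real.sqrt_ne_zero'.mpr (by positivity)
  have hd := (hasDerivAt_const (0:ℝ) c).div h2 hne2
  refine hd.congr_deriv (Eq.symm ?_)
  simp
lemma omega_deriv1 (μ x : ℝ) (h0 : x ≠ 0) (h1 : x ≠ 1) :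
    HasDerivAt (fun t => Omega μ (t, 0)) (gAxis μ x) x := by
  have hA : HasDerivAt (fun t : ℝ => (1 / 2 : ℝ) * ((t - μ) ^ 2 + (0:ℝ) ^ 2)) (x - μ) x := by
    have h := ((((hasDerivAt_id x).sub_const μ).pow 2).add_const ((0:ℝ) ^ 2)).const_mul (1/2 : ℝ)
    refine h.congr_deriv (Eq.symm ?_); simp only [id_eq]; ring
  have hB := invsqrt_hasDeriv 0 (1 - μ) x h0
  have hC := invsqrt_hasDeriv 1 μ x h1
  have hsum := ((hA.add hB).add hC).add_const ((1 / 2) * μ * (1 - μ))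
  have heq : (fun t => Omega μ (t, 0)) =
      (fun t => (1 / 2 : ℝ) * ((t - μ) ^ 2 + (0:ℝ) ^ 2) + (1 - μ) / Real.sqrt ((t - 0) ^ 2 + 0 ^ 2)
        + μ / Real.sqrt ((t - 1) ^ 2 + 0 ^ 2) + (1 / 2) * μ * (1 - μ)) := by
    funext t; simp [Omega, r1, r2]
  rw [heq]
  refine hsum.congr_deriv (Eq.symm ?_)
  simp only [gAxis, sub_zero]
  ring

lemma omega_deriv2 (μ x : ℝ) (h0 : x ≠ 0) (h1 : x ≠ 1) :
    HasDerivAt (fun s => Omega μ (x, s)) 0 0 := by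
  have hA : HasDerivAt (fun s : ℝ => (1 / 2 : ℝ) * ((x - μ) ^ 2 + s ^ 2)) 0 0 := by
    have h := (((hasDerivAt_id (0:ℝ)).pow 2).const_add ((x - μ) ^ 2)).const_mul (1/2 : ℝ)
    refine h.congr_deriv (Eq.symm ?_); simp
  have hB := vert_hasDeriv x (1 - μ) h0
  have hC := vert_hasDeriv (x - 1) μ (sub_ne_zero.mpr h1)
  have hsum := ((hA.add hB).add hC).add_const ((1 / 2) * μ * (1 - μ))
  have heq : (fun s => Omega μ (x, s)) =
      (fun s => (1 / 2 : ℝ) * ((x - μ) ^ 2 + s ^ 2) + (1 - μ) / Real.sqrt (x ^ 2 + s ^ 2)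
        + μ / Real.sqrt ((x - 1) ^ 2 + s ^ 2) + (1 / 2) * μ * (1 - μ)) := by
    funext s; simp [Omega, r1, r2]
  rw [heq]
  refine hsum.congr_deriv (Eq.symm ?_)
  ring

lemma equilib (μ x : ℝ) (h0 : x ≠ 0) (h1 : x ≠ 1) (hg : gAxis μ x = 0) :
    IsSolutionOn μ Set.univ (fun _ => x) (fun _ => 0) := by
  intro t _
  have d1 : deriv (fun t => Omega μ (t, 0)) x = gAxis μ x := (omega_deriv1 μ x h0 h1).deriv
  have d2 : deriv (fun s => Omega μ (x, s)) 0 = 0 := (omega_deriv2 μ x h0 h1).deriv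
  constructor
  · simp only [OmegaY1, deriv_const']
    rw [d1, hg]; ring
  · simp only [OmegaY2, deriv_const']
    rw [d2]; ring

lemma gAxis_form_mid (μ x : ℝ) (h0 : 0 < x) (h1 : x < 1) :
    gAxis μ x = x - μ - (1 - μ) / x ^ 2 + μ / (1 - x) ^ 2 := by
  have hx : x ≠ 0 := ne_of_gt h0
  have hx1 : (1 : ℝ) - x ≠ 0 := by intro h; linarith [h]
  unfold gAxis
  rw [abs_of_pos h0, abs_of_neg (show x - 1 < 0 by linarith),
    show -(x - 1) = 1 - x by ring]
  field_simp
  ring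

lemma gAxis_form_right (μ x : ℝ) (h1 : 1 < x) :
    gAxis μ x = x - μ - (1 - μ) / x ^ 2 - μ / (x - 1) ^ 2 := by
  have hx : x ≠ 0 := by intro h; rw [h] at h1; linarith
  have hx1 : x - 1 ≠ 0 := by intro h; nlinarith [h]
  unfold gAxis
  rw [abs_of_pos (show (0:ℝ) < x by linarith), abs_of_pos (show (0:ℝ) < x - 1 by linarith)]
  field_simp

lemma gAxis_form_left (μ x : ℝ) (h0 : x < 0) :
    gAxis μ x = x - μ + (1 - μ) / x ^ 2 + μ / (1 - x) ^ 2 := by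
  have hx : x ≠ 0 := ne_of_lt h0
  have hx1 : (1:ℝ) - x ≠ 0 := by intro h; linarith [h]
  unfold gAxis
  rw [abs_of_neg h0, abs_of_neg (show x - 1 < 0 by linarith),
    show -(x - 1) = 1 - x by ring, show ((-x) ^ 3 : ℝ) = -(x ^ 3) by ring]
  field_simp
  ring

lemma gcont (μ : ℝ) {s : Set ℝ} (hs : ∀ x ∈ s, x ≠ 0 ∧ x ≠ 1) :
    ContinuousOn (gAxis μ) s := by
  have h1 : ContinuousOn (fun x : ℝ => (1 - μ) * x / |x| ^ 3) s := by
    apply ContinuousOn.div (by fun_prop) (by fun_prop)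
    intro x hx; exact pow_ne_zero _ (abs_ne_zero.mpr (hs x hx).1)
  have h2 : ContinuousOn (fun x : ℝ => μ * (x - 1) / |x - 1| ^ 3) s := by
    apply ContinuousOn.div (by fun_prop) (by fun_prop)
    intro x hx; exact pow_ne_zero _ (abs_ne_zero.mpr (sub_ne_zero.mpr (hs x hx).2))
  exact ((continuousOn_id.sub continuousOn_const).sub h1).sub h2

/-- for every `μ ∈ (0,1)` there are at least three collinear equilibrium
points, one in each of `(0,1)`, `(1,∞)`, `(−∞,0)`: the corresponding constant curves
solve the equations of motion, and each point is a zero of `g`. -/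
theorem collinear_equilibria_exist (μ : ℝ) (hμ : μ ∈ Set.Ioo (0 : ℝ) 1) :
    (∃ x ∈ Set.Ioo (0 : ℝ) 1,
      IsSolutionOn μ Set.univ (fun _ => x) (fun _ => 0) ∧ gAxis μ x = 0) ∧
    (∃ x ∈ Set.Ioi (1 : ℝ),
      IsSolutionOn μ Set.univ (fun _ => x) (fun _ => 0) ∧ gAxis μ x = 0) ∧
    (∃ x ∈ Set.Iio (0 : ℝ),
      IsSolutionOn μ Set.univ (fun _ => x) (fun _ => 0) ∧ gAxis μ x = 0) := by
  obtain ⟨hμ0, hμ1⟩ := hμ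
  have hμ1' : (0:ℝ) < 1 - μ := by linarith
  have hsμ : 0 < Real.sqrt μ := Real.sqrt_pos.mpr hμ0
  have hs1μ : 0 < Real.sqrt (1 - μ) := Real.sqrt_pos.mpr hμ1'
  have hsqμ : Real.sqrt μ ^ 2 = μ := Real.sq_sqrt (le_of_lt hμ0)
  have hsq1μ : Real.sqrt (1 - μ) ^ 2 = 1 - μ := Real.sq_sqrt (le_of_lt hμ1')
  have hsμ1 : Real.sqrt μ < 1 := by nlinarith [hsqμ, hsμ]
  have hs1μ1 : Real.sqrt (1 - μ) < 1 := by nlinarith [hsq1μ, hs1μ]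
  refine ⟨?_, ?_, ?_⟩
  -- Case 1: interval (0,1)
  · obtain ⟨a, ha_def⟩ : ∃ a : ℝ, a = Real.sqrt (1 - μ) / 3 := ⟨_, rfl⟩
    obtain ⟨b, hb_def⟩ : ∃ b : ℝ, b = 1 - Real.sqrt μ / 3 := ⟨_, rfl⟩
    have ha0 : 0 < a := by rw [ha_def]; positivity
    have ha3 : a < 1/3 := by rw [ha_def]; linarith
    have hb3 : 2/3 < b := by rw [hb_def]; linarith
    have hb1 : b < 1 := by rw [hb_def]; linarith
    have hab : a < b := by linarith
    have ha2 : a ^ 2 = (1 - μ) / 9 := by rw [ha_def]; rw [div_pow, hsq1μ]; norm_num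
    have hb2 : (1 - b) ^ 2 = μ / 9 := by
      rw [hb_def, show 1 - (1 - Real.sqrt μ / 3) = Real.sqrt μ / 3 by ring, div_pow, hsqμ]
      norm_num
    have hga : gAxis μ a < 0 := by
      rw [gAxis_form_mid μ a ha0 (by linarith)]
      have h9 : (1 - μ) / a ^ 2 = 9 := by
        rw [ha2]; field_simp
      have hq : μ / (1 - a) ^ 2 ≤ 9/4 := by
        rw [div_le_iff₀ (by nlinarith)]
        nlinarith
      rw [h9]; linarith
    have hgb : 0 < gAxis μ b := by
      rw [gAxis_form_mid μ b (by linarith) hb1]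
      have h9 : μ / (1 - b) ^ 2 = 9 := by
        rw [hb2]; field_simp
      have hq : (1 - μ) / b ^ 2 ≤ 9/4 := by
        rw [div_le_iff₀ (by nlinarith)]
        nlinarith
      rw [h9]; linarith
    have hcont : ContinuousOn (gAxis μ) (Set.Icc a b) :=
      gcont μ (fun x hx => ⟨ne_of_gt (lt_of_lt_of_le ha0 hx.1),
        ne_of_lt (lt_of_le_of_lt hx.2 hb1)⟩)
    have hmem : (0:ℝ) ∈ Set.Ioo (gAxis μ a) (gAxis μ b) := ⟨hga, hgb⟩
    obtain ⟨c, hcI, hgc⟩ := intermediate_value_Ioo (le_of_lt hab) hcont hmem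
    have hc0 : 0 < c := lt_trans ha0 hcI.1
    have hc1 : c < 1 := lt_trans hcI.2 hb1
    exact ⟨c, ⟨hc0, hc1⟩, equilib μ c (ne_of_gt hc0) (ne_of_lt hc1) hgc, hgc⟩
  -- Case 2: interval (1,∞)
  · obtain ⟨a, ha_def⟩ : ∃ a : ℝ, a = 1 + Real.sqrt μ / 3 := ⟨_, rfl⟩
    have ha1 : 1 < a := by rw [ha_def]; linarith
    have ha43 : a < 4/3 := by rw [ha_def]; linarith
    have ha2 : (a - 1) ^ 2 = μ / 9 := by
      rw [ha_def, show 1 + Real.sqrt μ / 3 - 1 = Real.sqrt μ / 3 by ring, div_pow, hsqμ]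
      norm_num
    have hga : gAxis μ a < 0 := by
      rw [gAxis_form_right μ a ha1]
      have h9 : μ / (a - 1) ^ 2 = 9 := by rw [ha2]; field_simp
      have hq : 0 ≤ (1 - μ) / a ^ 2 := by positivity
      rw [h9]; linarith
    have hgb : 0 < gAxis μ 3 := by
      rw [gAxis_form_right μ 3 (by norm_num)]
      have h1 : (1 - μ) / (3:ℝ) ^ 2 ≤ 1/9 := by
        rw [div_le_iff₀ (by norm_num)]; linarith
      have h2 : μ / ((3:ℝ) - 1) ^ 2 ≤ 1/4 := by
        rw [div_le_iff₀ (by norm_num)]; linarith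
      linarith
    have hab : a < 3 := by linarith
    have hcont : ContinuousOn (gAxis μ) (Set.Icc a 3) :=
      gcont μ (fun x hx => ⟨by intro h; rw [h] at hx; linarith [hx.1],
        ne_of_gt (lt_of_lt_of_le ha1 hx.1)⟩)
    have hmem : (0:ℝ) ∈ Set.Ioo (gAxis μ a) (gAxis μ 3) := ⟨hga, hgb⟩
    obtain ⟨c, hcI, hgc⟩ := intermediate_value_Ioo (le_of_lt hab) hcont hmem
    have hc1 : 1 < c := lt_trans ha1 hcI.1
    exact ⟨c, hc1, equilib μ c (by linarith) (ne_of_gt hc1) hgc, hgc⟩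
  -- Case 3: interval (-∞,0)
  · obtain ⟨b, hb_def⟩ : ∃ b : ℝ, b = -(Real.sqrt (1 - μ) / 3) := ⟨_, rfl⟩
    have hb0 : b < 0 := by rw [hb_def]; linarith
    have hb3 : -1/3 < b := by rw [hb_def]; linarith
    have hb2 : b ^ 2 = (1 - μ) / 9 := by
      rw [hb_def, neg_pow, div_pow, hsq1μ]; norm_num
    have hga : gAxis μ (-2) < 0 := by
      rw [gAxis_form_left μ (-2) (by norm_num)]
      have h1 : (1 - μ) / ((-2:ℝ)) ^ 2 ≤ 1/4 := by
        rw [div_le_iff₀ (by norm_num)]; linarith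
      have h2 : μ / (1 - (-2:ℝ)) ^ 2 ≤ 1/9 := by
        rw [div_le_iff₀ (by norm_num)]; linarith
      linarith
    have hgb : 0 < gAxis μ b := by
      rw [gAxis_form_left μ b hb0]
      have h9 : (1 - μ) / b ^ 2 = 9 := by rw [hb2]; field_simp
      have hq : 0 ≤ μ / (1 - b) ^ 2 := by positivity
      rw [h9]; linarith
    have hab : (-2:ℝ) < b := by linarith
    have hcont : ContinuousOn (gAxis μ) (Set.Icc (-2) b) :=
      gcont μ (fun x hx => ⟨ne_of_lt (lt_of_le_of_lt hx.2 hb0),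
        by intro h; rw [h] at hx; linarith [hx.2]⟩)
    have hmem : (0:ℝ) ∈ Set.Ioo (gAxis μ (-2)) (gAxis μ b) := ⟨hga, hgb⟩
    obtain ⟨c, hcI, hgc⟩ := intermediate_value_Ioo (le_of_lt hab) hcont hmem
    have hc0 : c < 0 := lt_trans hcI.2 hb0
    exact ⟨c, hc0, equilib μ c (ne_of_lt hc0) (by linarith) hgc, hgc⟩
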